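/- Let σ ⊂ ℝ^N be an n-simplex with simplicial interior Int σ and boundary Bd σ, let 𝒜 ⊂ σ be compact, let z ∈ Int σ with z ∉ 𝒜, and let 𝒞 = {αx+(1−α)z ∈ σ : x ∈ 𝒜, α ≥ 0}. For x ∈ σ∖{z}, let h̄(x) denote the unique point of Bd σ on the ray from z through x. Then 𝒞 ∩ Bd σ = h̄(𝒜). -/

import Mathlib

/-- The simplicial interior of the simplex spanned by `v 0, …, v n`. -/
def simplexInterior {E : Type*} [AddCommGroup E] [Module ℝ E] {n : ℕ}
    (v : Fin (n + 1) → E) : Set E :=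
  {y | ∃ β : Fin (n + 1) → ℝ, (∀ i, 0 < β i) ∧ (∑ i, β i) = 1 ∧ y = ∑ i, β i • v i}

/-- The cone `𝒞 = {αx + (1−α)z ∈ σ : x ∈ 𝒜, α ≥ 0}`. -/
def simplexCone {E : Type*} [AddCommGroup E] [Module ℝ E]
    (σ 𝒜 : Set E) (z : E) : Set E :=
  {y ∈ σ | ∃ x ∈ 𝒜, ∃ α : ℝ, 0 ≤ α ∧ y = α • x + (1 - α) • z}


lemma mem_hull_weights {E : Type*} [AddCommGroup E] [Module ℝ E] {n : ℕ}
    {v : Fin (n + 1) → E} {w : E} (hw : w ∈ convexHull ℝ (Set.range v)) :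
    ∃ γ : Fin (n + 1) → ℝ, (∀ i, 0 ≤ γ i) ∧ (∑ i, γ i) = 1 ∧ w = ∑ i, γ i • v i := by
  rw [convexHull_range_eq_exists_affineCombination] at hw
  obtain ⟨s, w', h0, h1, h2⟩ := hw
  refine ⟨fun i => if i ∈ s then w' i else 0,
    fun i => by by_cases hi : i ∈ s <;> simp [hi, h0 i], ?_, ?_⟩
  · rw [Finset.sum_ite_mem, Finset.univ_inter, h1]
  · rw [← h2, Finset.affineCombination_eq_linear_combination s v w' h1]
    simp_rw [ite_smul, zero_smul]
    rw [Finset.sum_ite_mem, Finset.univ_inter]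

/-- Proper convex combination of an interior point and a point of the simplex is interior. -/
lemma interior_absorb {E : Type*} [AddCommGroup E] [Module ℝ E] {n : ℕ}
    {v : Fin (n + 1) → E} {z w : E}
    (hz : z ∈ simplexInterior v) (hw : w ∈ convexHull ℝ (Set.range v))
    {t : ℝ} (ht : 0 < t) (ht1 : t < 1) :
    t • w + (1 - t) • z ∈ simplexInterior v := by
  obtain ⟨β, hβ0, hβ1, hβ⟩ := hz
  obtain ⟨γ, hγ0, hγ1, hγ⟩ := mem_hull_weights hw
  refine ⟨fun i => t * γ i + (1 - t) * β i, fun i => ?_, ?_, ?_⟩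
  · show 0 < t * γ i + (1 - t) * β i
    nlinarith [hβ0 i, hγ0 i, mul_nonneg ht.le (hγ0 i)]
  · rw [Finset.sum_add_distrib, ← Finset.mul_sum, ← Finset.mul_sum, hβ1, hγ1]; ring
  · rw [hβ, hγ, Finset.smul_sum, Finset.smul_sum, ← Finset.sum_add_distrib]
    exact Finset.sum_congr rfl fun i _ => by rw [add_smul, smul_smul, smul_smul]

/-- `𝒞 ∩ Bd σ = h̄(𝒜)`, where `h̄(x)` is the (unique) point `p` of `Bd σ`
with `b·p + (1−b)·z = x` for some `b ∈ (0,1]`. Here `Bd σ = σ ∖ Int σ`. -/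
theorem stmt_6 {N n : ℕ} (v : Fin (n + 1) → EuclideanSpace ℝ (Fin N))
    (hv : AffineIndependent ℝ v)
    (𝒜 : Set (EuclideanSpace ℝ (Fin N)))
    (h𝒜σ : 𝒜 ⊆ convexHull ℝ (Set.range v)) (h𝒜c : IsCompact 𝒜)
    (z : EuclideanSpace ℝ (Fin N)) (hz : z ∈ simplexInterior v) (hz𝒜 : z ∉ 𝒜) :
    simplexCone (convexHull ℝ (Set.range v)) 𝒜 z ∩
        (convexHull ℝ (Set.range v) \ simplexInterior v) =
      {p ∈ convexHull ℝ (Set.range v) \ simplexInterior v |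
        ∃ x ∈ 𝒜, ∃ b : ℝ, 0 < b ∧ b ≤ 1 ∧ b • p + (1 - b) • z = x} := by
  ext p
  simp only [Set.mem_inter_iff, Set.mem_setOf_eq, simplexCone, Set.mem_sep_iff, Set.mem_diff]
  constructor
  · rintro ⟨⟨hpσ, x, hx𝒜, α, hα0, hp⟩, hpBd⟩
    refine ⟨hpBd, x, hx𝒜, ?_⟩
    have hα0' : 0 < α := by
      rcases lt_or_eq_of_le hα0 with h | h
      · exact h
      · exfalso; apply hpBd.2; rw [hp, ← h]; simpa using hz
    have hα1 : 1 ≤ α := by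
      by_contra h
      push_neg at h
      exact hpBd.2 (hp ▸ interior_absorb hz (h𝒜σ hx𝒜) hα0' h)
    refine ⟨1/α, by positivity, by rw [div_le_one hα0']; exact hα1, ?_⟩
    rw [hp, smul_add, smul_smul, smul_smul, add_assoc, ← add_smul]
    rw [show (1:ℝ)/α * α = 1 by field_simp, show (1:ℝ)/α * (1-α) + (1 - 1/α) = 0 by field_simp; ring]
    simp
  · rintro ⟨hpBd, x, hx𝒜, b, hb0, hb1, hbx⟩
    refine ⟨⟨hpBd.1, x, hx𝒜, 1/b, by positivity, ?_⟩, hpBd⟩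
    rw [← hbx, smul_add, smul_smul, smul_smul, add_assoc, ← add_smul]
    rw [show (1:ℝ)/b * b = 1 by field_simp, show (1:ℝ)/b * (1-b) + (1 - 1/b) = 0 by field_simp; ring]
    simp
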